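/- Let 𝒳 be a collection of subsets of a finite set [d] and let M be any 𝒳-matroid on [d] (a matroid in which every member of 𝒳 is a circuit). Then for every subset F ⊆ [d], the rank of F in M is at most v_𝒳(F), where v_𝒳 is the refined valuation function. -/

import Mathlib

open Finset

variable {d : ℕ}

/-- A proper 𝒳-sequence: a list of members of 𝒳, each not contained in the union
of the preceding ones. -/
def ProperSeq (𝒳 : Finset (Finset (Fin d))) (l : List (Finset (Fin d))) : Prop :=
  (∀ x ∈ l, x ∈ 𝒳) ∧ ∀ (i : ℕ) (hi : i < l.length), 1 ≤ i →
    ¬ l.get ⟨i, hi⟩ ⊆ (l.take i).foldr (· ∪ ·) ∅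

/-- `val(F, S) = |F ∪ X₁ ∪ ⋯ ∪ X_k| − k`. -/
def seqVal (F : Finset (Fin d)) (l : List (Finset (Fin d))) : ℤ :=
  ((F ∪ l.foldr (· ∪ ·) ∅).card : ℤ) - l.length

/-- `val_𝒳(F)`: the minimum of `val(F,S)` over proper 𝒳-sequences `S`. -/
noncomputable def valX (𝒳 : Finset (Finset (Fin d))) (F : Finset (Fin d)) : ℤ :=
  sInf {v : ℤ | ∃ l : List (Finset (Fin d)), ProperSeq 𝒳 l ∧ v = seqVal F l}

/-- Condition (i) applies to `v`. -/
def Cond1 (𝒳 : Finset (Finset (Fin d))) (v : Finset (Fin d) → ℤ) : Prop :=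
  ∃ A B x : Finset (Fin d), x ∈ 𝒳 ∧ A ∩ B ⊆ x ∧
    v (A ∪ B) > v A + v B - min ((A ∩ B).card : ℤ) ((x.card : ℤ) - 1)

/-- Condition (ii) applies to `v`. -/
def Cond2 (v : Finset (Fin d) → ℤ) : Prop :=
  ∃ A B : Finset (Fin d), A ⊂ B ∧ v A > v B

/-- Condition (iii) applies to `v`. -/
def Cond3 (v : Finset (Fin d) → ℤ) : Prop :=
  ∃ A B : Finset (Fin d), B ⊂ A ∧ v A > v B + ((A \ B).card : ℤ)

/-- One refinement step of the procedure (with the stated priorities). -/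
def RefStep (𝒳 : Finset (Finset (Fin d))) (v w : Finset (Fin d) → ℤ) : Prop :=
  (∃ A B x : Finset (Fin d), x ∈ 𝒳 ∧ A ∩ B ⊆ x ∧
      v (A ∪ B) > v A + v B - min ((A ∩ B).card : ℤ) ((x.card : ℤ) - 1) ∧
      w = Function.update v (A ∪ B)
        (v A + v B - min ((A ∩ B).card : ℤ) ((x.card : ℤ) - 1))) ∨
  (¬ Cond1 𝒳 v ∧ ∃ A B : Finset (Fin d), A ⊂ B ∧ v A > v B ∧
      w = Function.update v A (v B)) ∨
  (¬ Cond1 𝒳 v ∧ ¬ Cond2 v ∧ ∃ A B : Finset (Fin d), B ⊂ A ∧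
      v A > v B + ((A \ B).card : ℤ) ∧
      w = Function.update v A (v B + ((A \ B).card : ℤ)))

/-- `v` is stable: no refinement step applies. -/
def Stable (𝒳 : Finset (Finset (Fin d))) (v : Finset (Fin d) → ℤ) : Prop :=
  ¬ Cond1 𝒳 v ∧ ¬ Cond2 v ∧ ¬ Cond3 v

/-- `v` is an outcome of the refinement procedure started at `val_𝒳`. -/
def IsRefinedVal (𝒳 : Finset (Finset (Fin d))) (v : Finset (Fin d) → ℤ) : Prop :=
  Relation.ReflTransGen (RefStep 𝒳) (valX 𝒳) v ∧ Stable 𝒳 v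

/-- `C` is a circuit of `M`: a minimal dependent set. -/
def IsCircuitOf (M : Matroid (Fin d)) (C : Set (Fin d)) : Prop :=
  M.Dep C ∧ ∀ D : Set (Fin d), D ⊂ C → ¬ M.Dep D

/-- An 𝒳-matroid: a matroid (on the full ground set) in which every member of 𝒳
is a circuit. -/
def IsXMatroid (𝒳 : Finset (Finset (Fin d))) (M : Matroid (Fin d)) : Prop :=
  M.E = Set.univ ∧ ∀ x ∈ 𝒳, IsCircuitOf M ↑x

open scoped Classical in
/-- Rank of a finset in a matroid on `Fin d`. -/
noncomputable def rkM (M : Matroid (Fin d)) (A : Finset (Fin d)) : ℕ :=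
  A.powerset.sup fun (J : Finset (Fin d)) => if M.Indep (↑J : Set (Fin d)) then J.card else 0

lemma card_le_rkM {M : Matroid (Fin d)} {A I : Finset (Fin d)} (hIA : I ⊆ A)
    (hI : M.Indep ↑I) : I.card ≤ rkM M A := by
  classical
  have := Finset.le_sup (f := fun (J : Finset (Fin d)) => if M.Indep (↑J : Set (Fin d)) then J.card else 0)
    (Finset.mem_powerset.mpr hIA)
  rw [if_pos hI] at this
  rw [rkM]
  convert this using 2

lemma exists_rkM_set (M : Matroid (Fin d)) (A : Finset (Fin d)) :
    ∃ I : Finset (Fin d), I ⊆ A ∧ M.Indep ↑I ∧ I.card = rkM M A := by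
  classical
  obtain ⟨I, hI, hEq⟩ := Finset.exists_mem_eq_sup A.powerset ⟨∅, by simp⟩
    (fun (J : Finset (Fin d)) => if M.Indep (↑J : Set (Fin d)) then J.card else 0)
  by_cases h : M.Indep (↑I : Set (Fin d))
  · exact ⟨I, Finset.mem_powerset.mp hI, h, by rw [rkM, hEq, if_pos h]⟩
  · refine ⟨∅, Finset.empty_subset _, by simpa using M.empty_indep, ?_⟩
    rw [rkM, hEq, if_neg h]
    simp

lemma rkM_le_of_forall {M : Matroid (Fin d)} {A : Finset (Fin d)} {n : ℕ}
    (h : ∀ I : Finset (Fin d), I ⊆ A → M.Indep ↑I → I.card ≤ n) : rkM M A ≤ n := by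
  obtain ⟨I, hIA, hI, hcard⟩ := exists_rkM_set M A
  exact hcard ▸ h I hIA hI

lemma rkM_le_card (M : Matroid (Fin d)) (A : Finset (Fin d)) : rkM M A ≤ A.card :=
  rkM_le_of_forall fun _ hIA _ => Finset.card_le_card hIA

lemma rkM_mono {M : Matroid (Fin d)} {A B : Finset (Fin d)} (h : A ⊆ B) :
    rkM M A ≤ rkM M B :=
  rkM_le_of_forall fun _ hIA hI => card_le_rkM (hIA.trans h) hI

lemma exists_basis_rkM {M : Matroid (Fin d)} (hE : M.E = Set.univ) (A : Finset (Fin d)) :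
    ∃ I : Finset (Fin d), I ⊆ A ∧ M.IsBasis ↑I ↑A ∧ I.card = rkM M A := by
  classical
  obtain ⟨I, hIA, hI, hcard⟩ := exists_rkM_set M A
  refine ⟨I, hIA, Matroid.isBasis_iff_indep_closure.mpr ⟨hI, ?_, by exact_mod_cast hIA⟩, hcard⟩
  intro e he
  simp only [Finset.coe_subset, Finset.mem_coe] at he
  by_cases heI : e ∈ I
  · exact M.subset_closure ↑I (by rw [hE]; exact Set.subset_univ _) heI
  · by_contra hecl
    have hins : M.Indep (insert e ↑I) := by
      rw [hI.insert_indep_iff_of_notMem (by simpa using heI)]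
      exact ⟨by rw [hE]; trivial, hecl⟩
    have : (insert e I).card ≤ rkM M A := by
      apply card_le_rkM ?_ (by simpa using hins)
      intro a ha
      rw [Finset.mem_insert] at ha
      rcases ha with rfl | ha
      · exact he
      · exact hIA ha
    rw [Finset.card_insert_of_notMem heI, hcard] at this
    omega

lemma basis_card_rkM {M : Matroid (Fin d)} (hE : M.E = Set.univ) {A J : Finset (Fin d)}
    (hJ : M.IsBasis ↑J ↑A) : J.card = rkM M A := by
  obtain ⟨I, _, hI, hcard⟩ := exists_basis_rkM hE A
  have := hJ.encard_eq_encard hI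
  rw [Set.encard_coe_eq_coe_finsetCard, Set.encard_coe_eq_coe_finsetCard] at this
  rw [← hcard]
  exact_mod_cast this

lemma rkM_le_of_subset_closure {M : Matroid (Fin d)} (hE : M.E = Set.univ)
    {A B : Finset (Fin d)} (h : ↑A ⊆ M.closure ↑B) : rkM M A ≤ rkM M B := by
  refine rkM_le_of_forall fun I hIA hI => ?_
  obtain ⟨J, _, hJ, hcard⟩ := exists_basis_rkM hE B
  have hIcl : ↑I ⊆ M.closure ↑J := by
    rw [hJ.closure_eq_closure]
    exact (Finset.coe_subset.mpr hIA).trans h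
  obtain ⟨I', hI', hII'⟩ := hI.subset_isBasis_of_subset hIcl (M.closure_subset_ground _)
  have hJ' : M.IsBasis ↑J (M.closure ↑J) := hJ.indep.isBasis_closure
  have := hI'.encard_eq_encard hJ'
  have h1 : (↑I : Set (Fin d)).encard ≤ I'.encard := Set.encard_mono hII'
  rw [this, Set.encard_coe_eq_coe_finsetCard, Set.encard_coe_eq_coe_finsetCard] at h1
  rw [← hcard]
  exact_mod_cast h1

lemma rkM_union_le (M : Matroid (Fin d)) (A B : Finset (Fin d)) :
    rkM M (A ∪ B) ≤ rkM M A + (B \ A).card := by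
  classical
  refine rkM_le_of_forall fun I hIA hI => ?_
  have h1 : (I ∩ A).card + (I \ A).card = I.card := Finset.card_inter_add_card_sdiff I A
  have h2 : (I ∩ A).card ≤ rkM M A :=
    card_le_rkM (Finset.inter_subset_right) (hI.subset (by simp))
  have h3 : (I \ A).card ≤ (B \ A).card := by
    apply Finset.card_le_card
    intro a ha
    rw [Finset.mem_sdiff] at ha ⊢
    exact ⟨(Finset.mem_union.mp (hIA ha.1)).resolve_left ha.2, ha.2⟩
  omega

lemma rkM_submod {M : Matroid (Fin d)} (hE : M.E = Set.univ) (A B : Finset (Fin d)) :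
    rkM M (A ∪ B) + rkM M (A ∩ B) ≤ rkM M A + rkM M B := by
  classical
  obtain ⟨J, hJAB, hJ, hJcard⟩ := exists_basis_rkM hE (A ∩ B)
  obtain ⟨JA, hJA, hJJA⟩ := hJ.indep.subset_isBasis_of_subset
    (show (↑J : Set (Fin d)) ⊆ ↑A by exact_mod_cast hJAB.trans Finset.inter_subset_left)
    (by rw [hE]; exact Set.subset_univ _)
  obtain ⟨K, hK, hJAK⟩ := hJA.indep.subset_isBasis_of_subset
    (show JA ⊆ (↑(A ∪ B) : Set (Fin d)) from hJA.subset.trans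
      (by rw [Finset.coe_union]; exact Set.subset_union_left))
    (by rw [hE]; exact Set.subset_univ _)
  -- convert JA, K to finsets
  have hJAfin : JA.Finite := (Set.finite_coe_iff.mp (by exact Set.Finite.to_subtype (Set.toFinite JA)))
  have hKfin : K.Finite := Set.toFinite K
  set JAf := hJAfin.toFinset with hJAf
  set Kf := hKfin.toFinset with hKf
  have hJAcoe : (↑JAf : Set (Fin d)) = JA := hJAfin.coe_toFinset
  have hKcoe : (↑Kf : Set (Fin d)) = K := hKfin.coe_toFinset
  -- K ∩ A = JA
  have hKA : JA = K ∩ ↑A := by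
    refine hJA.eq_of_subset_indep (hK.indep.subset (Set.inter_subset_left))
      (Set.subset_inter hJAK hJA.subset) (Set.inter_subset_right)
  -- Finset versions
  have hKAf : JAf = Kf ∩ A := by
    apply Finset.coe_injective
    rw [Finset.coe_inter, hJAcoe, hKcoe, hKA]
  -- card identities
  have hKfcard : Kf.card = rkM M (A ∪ B) := by
    apply basis_card_rkM hE
    rw [hKcoe]; exact hK
  have hJAfcard : JAf.card = rkM M A := by
    apply basis_card_rkM hE
    rw [hJAcoe]; exact hJA
  -- (Kf \ A) ∪ J is independent subset of B
  have hsubK : ((Kf \ A) ∪ J : Finset (Fin d)) ⊆ Kf := by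
    intro a ha
    rw [Finset.mem_union] at ha
    rcases ha with ha | ha
    · exact (Finset.mem_sdiff.mp ha).1
    · have h1 : a ∈ JA := hJJA (Finset.mem_coe.mpr ha)
      have h2 : a ∈ K := hJAK h1
      rw [← hKcoe] at h2
      exact_mod_cast h2
  have hindep : M.Indep ↑((Kf \ A) ∪ J : Finset (Fin d)) := by
    refine hK.indep.subset ?_
    rw [← hKcoe]
    exact_mod_cast hsubK
  have hsubB : ((Kf \ A) ∪ J : Finset (Fin d)) ⊆ B := by
    intro a ha
    rw [Finset.mem_union] at ha
    rcases ha with ha | ha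
    · rw [Finset.mem_sdiff] at ha
      have : a ∈ K := by rw [← hKcoe]; exact_mod_cast ha.1
      have h2 := hK.subset this
      rw [Finset.coe_union, Set.mem_union] at h2
      rcases h2 with h | h
      · exact absurd (Finset.mem_coe.mp h) ha.2
      · exact_mod_cast h
    · exact (Finset.mem_inter.mp (hJAB ha)).2
  have hcardle : ((Kf \ A) ∪ J).card ≤ rkM M B := card_le_rkM hsubB hindep
  have hdisj : Disjoint (Kf \ A) J := by
    apply Finset.disjoint_left.mpr
    intro a ha haJ
    exact (Finset.mem_sdiff.mp ha).2 (Finset.mem_inter.mp (hJAB haJ)).1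
  have hcardu : ((Kf \ A) ∪ J).card = (Kf \ A).card + J.card :=
    Finset.card_union_of_disjoint hdisj
  have hsplit : (Kf ∩ A).card + (Kf \ A).card = Kf.card := Finset.card_inter_add_card_sdiff Kf A
  rw [← hKfcard, ← hJAfcard, ← hJcard, hKAf]
  omega

lemma circuit_nonempty {M : Matroid (Fin d)} {x : Finset (Fin d)}
    (hx : IsCircuitOf M ↑x) : x.Nonempty := by
  rw [Finset.nonempty_iff_ne_empty]
  rintro rfl
  exact hx.1.not_indep (by simpa using M.empty_indep)

lemma circuit_ssubset_indep {M : Matroid (Fin d)} (hE : M.E = Set.univ)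
    {x S : Finset (Fin d)} (hx : IsCircuitOf M ↑x) (h : S ⊂ x) : M.Indep ↑S := by
  have := hx.2 ↑S (by exact_mod_cast h)
  exact Matroid.indep_of_not_dep this (by rw [hE]; exact Set.subset_univ _)

lemma circuit_mem_closure {M : Matroid (Fin d)} (hE : M.E = Set.univ)
    {x : Finset (Fin d)} (hx : IsCircuitOf M ↑x) {e : Fin d} (he : e ∈ x) :
    e ∈ M.closure ↑(x.erase e) := by
  have hind : M.Indep ↑(x.erase e) :=
    circuit_ssubset_indep hE hx (Finset.erase_ssubset he)
  have hdep : M.Dep (insert e ↑(x.erase e)) := by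
    rw [Finset.coe_erase, Set.insert_diff_singleton, Set.insert_eq_self.mpr (by exact_mod_cast he)]
    exact hx.1
  rw [hind.insert_dep_iff] at hdep
  exact hdep.1

lemma circuit_rk_lb {M : Matroid (Fin d)} (hE : M.E = Set.univ)
    {x S : Finset (Fin d)} (hx : IsCircuitOf M ↑x) (h : S ⊆ x) :
    min ((S.card : ℤ)) ((x.card : ℤ) - 1) ≤ (rkM M S : ℤ) := by
  rcases h.ssubset_or_eq with h | rfl
  · have : S.card ≤ rkM M S :=
      card_le_rkM (subset_refl S) (circuit_ssubset_indep hE hx h)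
    have := min_le_left ((S.card : ℤ)) ((x.card : ℤ) - 1)
    omega
  · obtain ⟨e, he⟩ := circuit_nonempty hx
    have hind : M.Indep ↑(S.erase e) :=
      circuit_ssubset_indep hE hx (Finset.erase_ssubset he)
    have h1 : (S.erase e).card ≤ rkM M S :=
      card_le_rkM (Finset.erase_subset e S) hind
    have h2 : (S.erase e).card = S.card - 1 := Finset.card_erase_of_mem he
    have h3 : 1 ≤ S.card := Finset.card_pos.mpr ⟨e, he⟩
    have := min_le_right ((S.card : ℤ)) ((S.card : ℤ) - 1)
    omega

lemma foldr_union_eq (l : List (Finset (Fin d))) (b : Finset (Fin d)) :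
    l.foldr (· ∪ ·) b = l.foldr (· ∪ ·) ∅ ∪ b := by
  induction l with
  | nil => simp
  | cons x t ih => simp [List.foldr, ih, Finset.union_assoc]

lemma properSeq_concat {𝒳 : Finset (Finset (Fin d))} {l : List (Finset (Fin d))}
    {x : Finset (Fin d)} (h : ProperSeq 𝒳 (l ++ [x])) :
    ProperSeq 𝒳 l ∧ x ∈ 𝒳 ∧ (l ≠ [] → ¬ x ⊆ l.foldr (· ∪ ·) ∅) := by
  obtain ⟨h1, h2⟩ := h
  refine ⟨⟨fun y hy => h1 y (List.mem_append_left _ hy), ?_⟩, h1 x (by simp), ?_⟩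
  · intro i hi h1i
    have hi' : i < (l ++ [x]).length := by simp; omega
    have := h2 i hi' h1i
    rw [List.take_append_of_le_length (le_of_lt hi)] at this
    rw [List.get_eq_getElem]
    simp only [List.get_eq_getElem] at this
    rwa [List.getElem_append_left hi] at this
  · intro hl
    have hlen : 1 ≤ l.length := by
      cases l with
      | nil => exact absurd rfl hl
      | cons _ _ => simp
    have hi' : l.length < (l ++ [x]).length := by simp
    have := h2 l.length hi' hlen
    rw [List.take_append_of_le_length (le_refl _), List.take_length] at this
    simp only [List.get_eq_getElem] at this
    rw [List.getElem_append_right (le_refl _)] at this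
    simpa using this

lemma rkM_seq {𝒳 : Finset (Finset (Fin d))} {M : Matroid (Fin d)}
    (hE : M.E = Set.univ) (hC : ∀ x ∈ 𝒳, IsCircuitOf M ↑x)
    (l : List (Finset (Fin d))) (hl : ProperSeq 𝒳 l) (F : Finset (Fin d)) :
    (rkM M (F ∪ l.foldr (· ∪ ·) ∅) : ℤ) ≤
      ((F ∪ l.foldr (· ∪ ·) ∅).card : ℤ) - l.length := by
  induction l using List.reverseRecOn generalizing F with
  | nil =>
    simpa using (Nat.cast_le.mpr (rkM_le_card M (F ∪ ∅)) : ((rkM M (F ∪ ∅) : ℤ) ≤ _))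
  | append_singleton l' x ih =>
    obtain ⟨hl', hx𝒳, himp⟩ := properSeq_concat hl
    have hxC := hC x hx𝒳
    set G := l'.foldr (· ∪ ·) ∅ with hG
    have hfold : (l' ++ [x]).foldr (· ∪ ·) ∅ = G ∪ x := by
      rw [List.foldr_append, List.foldr, List.foldr, foldr_union_eq]
      simp
      rfl
    rw [hfold]
    -- pick e ∈ x with e ∉ G
    obtain ⟨e, hex, heG⟩ : ∃ e ∈ x, e ∉ G := by
      rcases eq_or_ne l' [] with rfl | hne
      · obtain ⟨e, he⟩ := circuit_nonempty hxC
        exact ⟨e, he, by simp [hG]⟩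
      · exact Finset.not_subset.mp (himp hne)
    set W := F ∪ (G ∪ x) with hW
    have hxW : x ⊆ W := by intro a ha; simp [hW, ha]
    have heW : e ∈ W := hxW hex
    -- rank doesn't change on erasing e
    have hcl : (↑W : Set (Fin d)) ⊆ M.closure ↑(W.erase e) := by
      intro a ha
      rcases eq_or_ne a e with rfl | hae
      · refine M.closure_subset_closure
          (by exact_mod_cast Finset.coe_subset.mpr (Finset.erase_subset_erase a hxW))
          (circuit_mem_closure hE hxC hex)
      · refine M.subset_closure ↑(W.erase e) (by rw [hE]; exact Set.subset_univ _) ?_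
        simp only [Finset.coe_erase, Set.mem_diff, Set.mem_singleton_iff]
        exact ⟨ha, hae⟩
    have r1 : rkM M W ≤ rkM M (W.erase e) := rkM_le_of_subset_closure hE hcl
    set Y := F.erase e ∪ G with hY
    have hYsub : Y ⊆ W.erase e := by
      intro a ha
      rw [Finset.mem_union] at ha
      rcases ha with ha | ha
      · rw [Finset.mem_erase] at ha ⊢
        exact ⟨ha.1, by simp [hW, ha.2]⟩
      · rw [Finset.mem_erase]
        exact ⟨fun h => heG (h ▸ ha), by simp [hW, ha]⟩
    have r2 : rkM M (W.erase e) ≤ rkM M Y + ((W.erase e) \ Y).card := by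
      have : Y ∪ W.erase e = W.erase e := Finset.union_eq_right.mpr hYsub
      calc rkM M (W.erase e) = rkM M (Y ∪ W.erase e) := by rw [this]
        _ ≤ rkM M Y + ((W.erase e) \ Y).card := rkM_union_le M Y (W.erase e)
    have r3 : (rkM M Y : ℤ) ≤ (Y.card : ℤ) - l'.length := ih hl' (F.erase e)
    have c1 : ((W.erase e) \ Y).card + Y.card = (W.erase e).card := by
      rw [Finset.card_sdiff_add_card_eq_card hYsub]
    have c2 : (W.erase e).card + 1 = W.card := Finset.card_erase_add_one heW
    have clen : (l' ++ [x]).length = l'.length + 1 := by simp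
    rw [clen]
    push_cast
    omega

/-- For any 𝒳-matroid `M` and any `F ⊆ [d]`, `rank_M(F) ≤ v_𝒳(F)`: every independent
subset of `F` has size at most `v_𝒳(F)`. -/
theorem stmt6 (𝒳 : Finset (Finset (Fin d))) (M : Matroid (Fin d))
    (hM : IsXMatroid 𝒳 M) (v : Finset (Fin d) → ℤ) (hv : IsRefinedVal 𝒳 v) :
    ∀ F I : Finset (Fin d), I ⊆ F → M.Indep ↑I → (I.card : ℤ) ≤ v F := by
  obtain ⟨hE, hC⟩ := hM
  suffices h : ∀ w, Relation.ReflTransGen (RefStep 𝒳) (valX 𝒳) w →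
      ∀ F I : Finset (Fin d), I ⊆ F → M.Indep ↑I → (I.card : ℤ) ≤ w F from h v hv.1
  intro w hw
  induction hw with
  | refl =>
    intro F I hIF hI
    refine le_csInf ⟨seqVal F [], [], ⟨by simp, fun i hi h1i => by simp at hi⟩, rfl⟩ ?_
    rintro b ⟨l, hl, rfl⟩
    have h1 : (I.card : ℤ) ≤ rkM M (F ∪ l.foldr (· ∪ ·) ∅) := by
      exact_mod_cast Nat.cast_le.mpr
        (card_le_rkM (hIF.trans Finset.subset_union_left) hI)
    exact h1.trans (rkM_seq hE hC l hl F)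
  | @tail b c _ hstep ih =>
    have hrk : ∀ A : Finset (Fin d), (rkM M A : ℤ) ≤ b A := by
      intro A
      obtain ⟨J, hJA, hJ, hcard⟩ := exists_rkM_set M A
      exact_mod_cast hcard ▸ ih A J hJA hJ
    rcases hstep with ⟨A, B, x, hx, hsub, hgt, rfl⟩ | ⟨-, A, B, hAB, hgt, rfl⟩ |
      ⟨-, -, A, B, hBA, hgt, rfl⟩
    · intro F I hIF hI
      by_cases hF : F = A ∪ B
      · subst hF
        rw [Function.update_self]
        have hAv := hrk A
        have hBv := hrk B
        have hsub' : (rkM M (A ∪ B) : ℤ) + rkM M (A ∩ B) ≤ rkM M A + rkM M B := by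
          exact_mod_cast rkM_submod hE A B
        have hlb := circuit_rk_lb hE (hC x hx) hsub
        have hIc : (I.card : ℤ) ≤ rkM M (A ∪ B) := by
          exact_mod_cast card_le_rkM hIF hI
        linarith
      · rw [Function.update_of_ne hF]
        exact ih F I hIF hI
    · intro F I hIF hI
      by_cases hF : F = A
      · subst hF
        rw [Function.update_self]
        exact ih B I (hIF.trans hAB.subset) hI
      · rw [Function.update_of_ne hF]
        exact ih F I hIF hI
    · intro F I hIF hI
      by_cases hF : F = A
      · subst hF
        rw [Function.update_self]
        have h1 : ((I ∩ B).card : ℤ) ≤ b B :=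
          ih B (I ∩ B) Finset.inter_subset_right (hI.subset (by simp))
        have h2 : (I \ B).card ≤ (F \ B).card :=
          Finset.card_le_card (Finset.sdiff_subset_sdiff hIF (subset_refl B))
        have h3 : (I ∩ B).card + (I \ B).card = I.card :=
          Finset.card_inter_add_card_sdiff I B
        push_cast at h1 h3 ⊢
        omega
      · rw [Function.update_of_ne hF]
        exact ih F I hIF hI
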